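/- If P ∈ ℚ⟨X⟩ is a Lie polynomial that is homogeneous of degree n (i.e., a ℚ-linear combination of words of length n), then r(P) = n·P (the Dynkin–Specht–Wever property). -/

import Mathlib

/-!
Setting: `ℚ⟨X⟩ = FreeAlgebra ℚ X`, the free associative `ℚ`-algebra on a type `X` of
non-commuting variables, with the commutator bracket `⁅P,Q⁆ = P*Q - Q*P` and canonical
inclusion `ι = FreeAlgebra.ι ℚ`.  The words (elements of `FreeMonoid X`) form a `ℚ`-basis
`FreeAlgebra.basisFreeMonoid ℚ X` of `ℚ⟨X⟩`.
-/

/-- The right-normed bracketing of a word: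
`[ι x₁,[ι x₂,[…,[ι x_{n−1}, ι xₙ]…]]]`, with the empty word mapped to `0`. -/
noncomputable def rword {X : Type*} : List X → FreeAlgebra ℚ X
  | [] => 0
  | [x] => FreeAlgebra.ι ℚ x
  | x :: y :: ys => ⁅FreeAlgebra.ι ℚ x, rword (y :: ys)⁆

/-- The right-normed bracketing map `r : ℚ⟨X⟩ → ℚ⟨X⟩`: the unique `ℚ`-linear map sending the
basis word `w₁w₂⋯wₙ` to `[ι w₁,[ι w₂,[…,[ι w_{n−1}, ι wₙ]…]]]` (and the empty word `1` to `0`,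
and a single letter `x` to `ι x`). -/
noncomputable def rmap (X : Type*) : FreeAlgebra ℚ X →ₗ[ℚ] FreeAlgebra ℚ X :=
  (FreeAlgebra.basisFreeMonoid ℚ X).constr ℚ fun w => rword w.toList

/-- The coefficient of the word `w` in `P`, with respect to the basis of words of `ℚ⟨X⟩`. -/
noncomputable def coeffWord {X : Type*} (P : FreeAlgebra ℚ X) (w : FreeMonoid X) : ℚ :=
  (FreeAlgebra.basisFreeMonoid ℚ X).repr P w

attribute [local instance 100] LieRing.ofAssociativeRing

/-- `P` is a Lie polynomial: it belongs to the Lie subalgebra of `ℚ⟨X⟩` (under the commutator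
bracket) generated by the image of `ι`, i.e. the smallest `ℚ`-subspace of `ℚ⟨X⟩` containing
`ι(X)` and closed under commutators. -/
def IsLiePolynomial {X : Type*} (P : FreeAlgebra ℚ X) : Prop :=
  P ∈ LieSubalgebra.lieSpan ℚ (FreeAlgebra ℚ X) (Set.range (FreeAlgebra.ι ℚ))

/-- `P` is homogeneous of degree `n`: a `ℚ`-linear combination of words of length `n`. -/
def IsHomogeneous {X : Type*} (n : ℕ) (P : FreeAlgebra ℚ X) : Prop :=
  P ∈ Submodule.span ℚ
    ((fun w : List X => (w.map (FreeAlgebra.ι ℚ)).prod) '' {w : List X | w.length = n})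

section aux
variable {X : Type*}

local notation "A" => FreeAlgebra ℚ X
local notation "ι" => FreeAlgebra.ι ℚ

lemma basis_apply' (w : FreeMonoid X) :
    FreeAlgebra.basisFreeMonoid ℚ X w = (w.toList.map ι).prod := by
  rw [FreeAlgebra.basisFreeMonoid, Module.Basis.map_apply, Finsupp.coe_basisSingleOne]
  show FreeAlgebra.equivMonoidAlgebraFreeMonoid.symm (MonoidAlgebra.single w 1) = _
  rw [FreeAlgebra.equivMonoidAlgebraFreeMonoid, AlgEquiv.ofAlgHom_symm_apply]
  simp [MonoidAlgebra.lift_single, FreeMonoid.lift_apply]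

lemma rmap_word (l : List X) : rmap X ((l.map ι).prod) = rword l := by
  have h : ((FreeMonoid.ofList l : FreeMonoid X).toList.map ι).prod = (l.map ι).prod := by
    rw [FreeMonoid.toList_ofList]
  rw [← h, ← basis_apply', rmap, Module.Basis.constr_basis, FreeMonoid.toList_ofList]

lemma rword_cons (x : X) (l : List X) (h : l ≠ []) :
    rword (x :: l) = ⁅ι x, rword l⁆ := by
  cases l with
  | nil => exact absurd rfl h
  | cons y ys => rfl

/-- adjoint representation lifted to the free algebra. -/
noncomputable def ρ : FreeAlgebra ℚ X →ₐ[ℚ] Module.End ℚ (FreeAlgebra ℚ X) :=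
  FreeAlgebra.lift ℚ fun x => LieAlgebra.ad ℚ (FreeAlgebra ℚ X) (ι x)

lemma rword_append (l₁ l₂ : List X) (h : l₂ ≠ []) :
    rword (l₁ ++ l₂) = ρ ((l₁.map ι).prod) (rword l₂) := by
  induction l₁ with
  | nil => simp
  | cons x t ih =>
    have ht : t ++ l₂ ≠ [] := by simp [h]
    rw [List.cons_append, rword_cons x _ ht, ih, List.map_cons, List.prod_cons, map_mul,
      Module.End.mul_apply, ρ, FreeAlgebra.lift_ι_apply, LieAlgebra.ad_apply]

/-- span of nonempty words -/
noncomputable def M : Submodule ℚ (FreeAlgebra ℚ X) :=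
  Submodule.span ℚ ((fun l : List X => (l.map ι).prod) '' {l | l ≠ []})

lemma M_mul {u v : A} (hu : u ∈ (M : Submodule ℚ A)) (hv : v ∈ (M : Submodule ℚ A)) :
    u * v ∈ (M : Submodule ℚ A) := by
  induction hu using Submodule.span_induction with
  | mem p hp =>
    induction hv using Submodule.span_induction with
    | mem q hq =>
      obtain ⟨l₁, hl₁, rfl⟩ := hp
      obtain ⟨l₂, hl₂, rfl⟩ := hq
      apply Submodule.subset_span
      exact ⟨l₁ ++ l₂, fun h => hl₁ (List.append_eq_nil_iff.mp h).1,
        by simp [List.prod_append]⟩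
    | zero => simpa using Submodule.zero_mem _
    | add a b _ _ ha hb => rw [mul_add]; exact Submodule.add_mem _ ha hb
    | smul c a _ ha => rw [mul_smul_comm]; exact Submodule.smul_mem _ _ ha
  | zero => simpa using Submodule.zero_mem _
  | add a b _ _ ha hb => rw [add_mul]; exact Submodule.add_mem _ ha hb
  | smul c a _ ha => rw [smul_mul_assoc]; exact Submodule.smul_mem _ _ ha

lemma key_mul (u : A) {v : A} (hv : v ∈ (M : Submodule ℚ A)) :
    rmap X (u * v) = ρ u (rmap X v) := by
  induction hv using Submodule.span_induction with
  | mem p hp =>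
    obtain ⟨l₂, hl₂, rfl⟩ := hp
    have hle : ((rmap X).comp (LinearMap.mulRight ℚ ((l₂.map ι).prod)))
        = (LinearMap.applyₗ (rmap X ((l₂.map ι).prod))).comp (ρ (X := X)).toLinearMap := by
      apply (FreeAlgebra.basisFreeMonoid ℚ X).ext
      intro w
      simp only [LinearMap.comp_apply, LinearMap.mulRight_apply, AlgHom.toLinearMap_apply,
        LinearMap.applyₗ_apply_apply, basis_apply']
      rw [rmap_word, ← List.prod_append, ← List.map_append, rmap_word,
        rword_append _ _ hl₂]
    exact LinearMap.congr_fun hle u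
  | zero => simp
  | add a b _ _ ha hb => rw [mul_add, map_add, ha, hb, map_add, map_add]
  | smul c a _ ha => rw [mul_smul_comm, map_smul, ha, map_smul, map_smul]

/-- the Lie subalgebra with carrier `M`. -/
noncomputable def ML : LieSubalgebra ℚ (FreeAlgebra ℚ X) where
  toSubmodule := M
  lie_mem' := fun {u v} hu hv => by
    rw [Ring.lie_def]
    exact Submodule.sub_mem _ (M_mul hu hv) (M_mul hv hu)

lemma lieSpan_le_ML :
    LieSubalgebra.lieSpan ℚ (FreeAlgebra ℚ X) (Set.range ι) ≤ (ML : LieSubalgebra ℚ A) := by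
  rw [LieSubalgebra.lieSpan_le]
  rintro _ ⟨x, rfl⟩
  apply Submodule.subset_span
  exact ⟨[x], by simp, by simp⟩

lemma ρ_eq_ad {P : A} (hP : P ∈ LieSubalgebra.lieSpan ℚ (FreeAlgebra ℚ X) (Set.range ι)) :
    ρ P = LieAlgebra.ad ℚ (FreeAlgebra ℚ X) P := by
  let S : LieSubalgebra ℚ (FreeAlgebra ℚ X) :=
    { toSubmodule := LinearMap.eqLocus (ρ (X := X)).toLinearMap
        (LieAlgebra.ad ℚ (FreeAlgebra ℚ X)).toLinearMap
      lie_mem' := fun {u v} hu hv => by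
        have hu' : ρ u = LieAlgebra.ad ℚ (FreeAlgebra ℚ X) u := hu
        have hv' : ρ v = LieAlgebra.ad ℚ (FreeAlgebra ℚ X) v := hv
        show ρ ⁅u, v⁆ = LieAlgebra.ad ℚ (FreeAlgebra ℚ X) ⁅u, v⁆
        rw [LieHom.map_lie (LieAlgebra.ad ℚ (FreeAlgebra ℚ X)) u v,
          Ring.lie_def, Ring.lie_def, map_sub, map_mul, map_mul, hu', hv'] }
  have : LieSubalgebra.lieSpan ℚ (FreeAlgebra ℚ X) (Set.range ι) ≤ S := by
    rw [LieSubalgebra.lieSpan_le]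
    rintro _ ⟨x, rfl⟩
    show ρ (ι x) = LieAlgebra.ad ℚ (FreeAlgebra ℚ X) (ι x)
    rw [ρ, FreeAlgebra.lift_ι_apply]
  exact this hP

/-- the Euler operator -/
noncomputable def eop : FreeAlgebra ℚ X →ₗ[ℚ] FreeAlgebra ℚ X :=
  (FreeAlgebra.basisFreeMonoid ℚ X).constr ℚ fun w =>
    (w.toList.length : ℚ) • (w.toList.map ι).prod

lemma eop_word (l : List X) : eop ((l.map ι).prod) = (l.length : ℚ) • (l.map ι).prod := by
  have h := Module.Basis.constr_basis (FreeAlgebra.basisFreeMonoid ℚ X) ℚ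
    (fun w => (w.toList.length : ℚ) • (w.toList.map ι).prod) (FreeMonoid.ofList l)
  rw [basis_apply', FreeMonoid.toList_ofList] at h
  exact h

lemma eop_mul (u v : A) : eop (u * v) = eop u * v + u * eop v := by
  have hword : ∀ w₁ w₂ : FreeMonoid X,
      eop ((FreeAlgebra.basisFreeMonoid ℚ X) w₁ * (FreeAlgebra.basisFreeMonoid ℚ X) w₂)
      = eop ((FreeAlgebra.basisFreeMonoid ℚ X) w₁) * (FreeAlgebra.basisFreeMonoid ℚ X) w₂
        + (FreeAlgebra.basisFreeMonoid ℚ X) w₁ * eop ((FreeAlgebra.basisFreeMonoid ℚ X) w₂) := by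
    intro w₁ w₂
    simp only [basis_apply']
    rw [← List.prod_append, ← List.map_append, eop_word, eop_word, eop_word,
      List.length_append, Nat.cast_add, add_smul, List.map_append, List.prod_append,
      smul_mul_assoc, mul_smul_comm]
  have h2 : ∀ w₁ : FreeMonoid X, ∀ v : A,
      eop ((FreeAlgebra.basisFreeMonoid ℚ X) w₁ * v)
      = eop ((FreeAlgebra.basisFreeMonoid ℚ X) w₁) * v
        + (FreeAlgebra.basisFreeMonoid ℚ X) w₁ * eop v := by
    intro w₁ v
    have hle : (eop (X := X)).comp (LinearMap.mulLeft ℚ ((FreeAlgebra.basisFreeMonoid ℚ X) w₁))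
        = LinearMap.mulLeft ℚ (eop ((FreeAlgebra.basisFreeMonoid ℚ X) w₁))
          + (LinearMap.mulLeft ℚ ((FreeAlgebra.basisFreeMonoid ℚ X) w₁)).comp (eop (X := X)) := by
      apply (FreeAlgebra.basisFreeMonoid ℚ X).ext
      intro w₂
      simpa using hword w₁ w₂
    simpa using LinearMap.congr_fun hle v
  have hle : (eop (X := X)).comp (LinearMap.mulRight ℚ v)
      = (LinearMap.mulRight ℚ v).comp (eop (X := X)) + LinearMap.mulRight ℚ (eop v) := by
    apply (FreeAlgebra.basisFreeMonoid ℚ X).ext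
    intro w₁
    simpa using h2 w₁ v
  simpa using LinearMap.congr_fun hle u

lemma eop_bracket (u v : A) : eop ⁅u, v⁆ = ⁅eop u, v⁆ + ⁅u, eop v⁆ := by
  simp only [Ring.lie_def, map_sub, eop_mul]
  abel

lemma rmap_eq_eop {P : A}
    (hP : P ∈ LieSubalgebra.lieSpan ℚ (FreeAlgebra ℚ X) (Set.range ι)) :
    rmap X P = eop P := by
  let S : LieSubalgebra ℚ (FreeAlgebra ℚ X) :=
    { carrier := {P | rmap X P = eop P ∧ P ∈ (M : Submodule ℚ A)
        ∧ P ∈ LieSubalgebra.lieSpan ℚ (FreeAlgebra ℚ X) (Set.range ι)}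
      add_mem' := fun {a b} ha hb =>
        ⟨by rw [map_add, map_add, ha.1, hb.1], Submodule.add_mem _ ha.2.1 hb.2.1,
          LieSubalgebra.add_mem _ ha.2.2 hb.2.2⟩
      zero_mem' := ⟨by simp, Submodule.zero_mem _, LieSubalgebra.zero_mem _⟩
      smul_mem' := fun c {a} ha =>
        ⟨by rw [map_smul, map_smul, ha.1], Submodule.smul_mem _ _ ha.2.1,
          LieSubalgebra.smul_mem _ c ha.2.2⟩
      lie_mem' := fun {u v} hu hv => by
        refine ⟨?_, (ML : LieSubalgebra ℚ A).lie_mem' hu.2.1 hv.2.1,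
          LieSubalgebra.lie_mem _ hu.2.2 hv.2.2⟩
        have hL : rmap X ⁅u, v⁆ = ⁅u, eop v⁆ + ⁅eop u, v⁆ := by
          rw [Ring.lie_def, map_sub, key_mul u hv.2.1, key_mul v hu.2.1,
            ρ_eq_ad hu.2.2, ρ_eq_ad hv.2.2, hu.1, hv.1, LieAlgebra.ad_apply,
            LieAlgebra.ad_apply, Ring.lie_def, Ring.lie_def, Ring.lie_def]
          abel
        rw [hL, eop_bracket]
        abel }
  have hl : LieSubalgebra.lieSpan ℚ (FreeAlgebra ℚ X) (Set.range ι) ≤ S := by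
    rw [LieSubalgebra.lieSpan_le]
    rintro _ ⟨x, rfl⟩
    refine ⟨?_, Submodule.subset_span ⟨[x], by simp, by simp⟩,
      LieSubalgebra.subset_lieSpan ⟨x, rfl⟩⟩
    have : ι x = (([x] : List X).map ι).prod := by simp
    rw [this, rmap_word, eop_word]
    simp [rword]
  exact (hl hP).1

end aux

/-- Dynkin–Specht–Wever: if `P` is a homogeneous Lie polynomial of degree `n`, then
`r(P) = n·P`. -/
theorem stmt_4 {X : Type*} (n : ℕ) (P : FreeAlgebra ℚ X)
    (hLie : IsLiePolynomial P) (hHom : IsHomogeneous n P) :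
    rmap X P = (n : ℚ) • P := by
  rw [rmap_eq_eop hLie]
  clear hLie
  induction hHom using Submodule.span_induction with
  | mem p hp =>
    obtain ⟨l, hl, rfl⟩ := hp
    rw [eop_word, hl]
  | zero => simp
  | add a b _ _ ha hb => rw [map_add, ha, hb, smul_add]
  | smul c a _ ha => rw [map_smul, ha, smul_comm]
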